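/- arXiv:2111.11972 — 2 statements merged into one kernel-verified Lean document; each statement's English description precedes it below -/
import Mathlib

section
/- For each D>0 there exists a constant C̃(D)>0 such that for every τ ∈ (0,1], every m ∈ P(𝕋^d), and all x,y ∈ ℝ^d with |x−y| ≤ τD, one has |h_τ^m(x,y) − 𝓛_{τ,m}(x,y)| ≤ τ² C̃(D). -/
open MeasureTheory Set Filter

noncomputable section

instance fact_zero_lt_one : Fact ((0:ℝ) < 1) := ⟨one_pos⟩

/-- Euclidean space `ℝ^d`. -/
abbrev Rd (d : ℕ) : Type := EuclideanSpace ℝ (Fin d)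

/-- The flat torus `𝕋^d = ℝ^d/ℤ^d`. -/
abbrev Torus (d : ℕ) : Type := Fin d → AddCircle (1:ℝ)

/-- Interpret a bare function `Fin d → ℝ` as a point of `ℝ^d`. -/
def toRd {d : ℕ} (f : Fin d → ℝ) : Rd d := (WithLp.equiv 2 (Fin d → ℝ)).symm f

/-- Canonical projection `π : ℝ^d → 𝕋^d`. -/
def projT {d : ℕ} (x : Rd d) : Torus d := fun i => (x i : AddCircle (1:ℝ))

/-- A lift `𝕋^d → ℝ^d` with coordinates in `[0,1)`. -/
def liftT {d : ℕ} (x : Torus d) : Rd d := toRd fun i => (AddCircle.equivIco 1 0 (x i)).1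

/-- `ℤ^d`-periodicity of a function on `ℝ^d`. -/
def ZPer {d : ℕ} {α : Type*} (φ : Rd d → α) : Prop :=
  ∀ (x : Rd d) (k : Fin d → ℤ), φ (x + toRd fun i => (k i : ℝ)) = φ x

/-- (L1): `∂²L/∂v²(x,v)` is positive definite. -/
def TonelliL1 {d : ℕ} (L : Torus d → Rd d → ℝ) : Prop :=
  ∀ (x : Torus d) (v w : Rd d), w ≠ 0 →
    0 < iteratedFDeriv ℝ 2 (fun v' => L x v') v ![w, w]

/-- (L2): superlinearity of `L` in `v`. -/
def TonelliL2 {d : ℕ} (L : Torus d → Rd d → ℝ) : Prop :=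
  ∀ K : ℝ, 0 < K → ∃ C : ℝ, ∀ (x : Torus d) (v : Rd d), K * ‖v‖ + C ≤ L x v

/-- `L` is `C²` (viewed through the covering `ℝ^d × ℝ^d → 𝕋^d × ℝ^d`). -/
def TonelliC2 {d : ℕ} (L : Torus d → Rd d → ℝ) : Prop :=
  ContDiff ℝ 2 (fun q : Rd d × Rd d => L (projT q.1) q.2)

/-- Borel probability measures on the torus, with the weak-* topology. -/
abbrev PT (d : ℕ) := ProbabilityMeasure (Torus d)

/-- Integral of `f` against a probability measure. -/
def intPM {X : Type*} [MeasurableSpace X] (μ : ProbabilityMeasure X) (f : X → ℝ) : ℝ :=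
  ∫ x, f x ∂(μ : Measure X)

/-- (F1): uniform `C²` bounds for the coupling. -/
def CouplingF1 {d : ℕ} (F : Torus d → PT d → ℝ) (Finf : ℝ) : Prop :=
  0 < Finf ∧ ∀ m : PT d,
    ContDiff ℝ 2 (fun x : Rd d => F (projT x) m) ∧
    (∀ x : Torus d, |F x m| ≤ Finf) ∧
    (∀ x : Rd d, ‖fderiv ℝ (fun x' : Rd d => F (projT x') m) x‖ ≤ Finf)

/-- The Kantorovich–Rubinstein distance `d₁`. -/
def d1 {d : ℕ} (m₁ m₂ : PT d) : ℝ :=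
  sSup { r : ℝ | ∃ g : Torus d → ℝ, LipschitzWith 1 g ∧ r = |intPM m₁ g - intPM m₂ g| }

/-- (F2): continuity of `F` and `D_xF` on `𝕋^d × P(𝕋^d)`. -/
def CouplingF2 {d : ℕ} (F : Torus d → PT d → ℝ) : Prop :=
  Continuous (fun q : Torus d × PT d => F q.1 q.2) ∧
  Continuous (fun q : Rd d × PT d => fderiv ℝ (fun x : Rd d => F (projT x) q.2) q.1)

/-- (F3): Lipschitz continuity of `F` in the measure variable. -/
def CouplingF3 {d : ℕ} (F : Torus d → PT d → ℝ) (LipF : ℝ) : Prop :=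
  0 < LipF ∧ ∀ (x : Torus d) (m₁ m₂ : PT d), |F x m₁ - F x m₂| ≤ LipF * d1 m₁ m₂

/-- The Lagrangian `L_m(x,v) = L(x,v) + F(x,m)` on the torus. -/
def LmT {d : ℕ} (L : Torus d → Rd d → ℝ) (F : Torus d → PT d → ℝ) (m : PT d) :
    Torus d → Rd d → ℝ := fun x v => L x v + F x m

/-- The Lagrangian `L_m` lifted to `ℝ^d`. -/
def LmR {d : ℕ} (L : Torus d → Rd d → ℝ) (F : Torus d → PT d → ℝ) (m : PT d) :
    Rd d → Rd d → ℝ := fun x v => LmT L F m (projT x) v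

/-- A continuous, piecewise `C¹` curve on `[0,t]`. -/
def PiecewiseC1On {d : ℕ} (γ : ℝ → Rd d) (t : ℝ) : Prop :=
  ContinuousOn γ (Icc 0 t) ∧
  ∃ (n : ℕ) (s : Fin (n + 1) → ℝ), StrictMono s ∧ s 0 = 0 ∧ s (Fin.last n) = t ∧
    ∀ i : Fin n, ContDiffOn ℝ 1 γ (Icc (s i.castSucc) (s i.succ))

/-- The action `∫₀ᵗ Lag(γ, γ̇) ds` of a curve. -/
def curveAction {d : ℕ} (Lag : Rd d → Rd d → ℝ) (t : ℝ) (γ : ℝ → Rd d) : ℝ :=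
  ∫ s in Icc (0:ℝ) t, Lag (γ s) (deriv γ s)

/-- The minimal action `h_t(x,y)`. -/
def minAction {d : ℕ} (Lag : Rd d → Rd d → ℝ) (t : ℝ) (x y : Rd d) : ℝ :=
  sInf { a : ℝ | ∃ γ : ℝ → Rd d, PiecewiseC1On γ t ∧ γ 0 = x ∧ γ t = y ∧
    a = curveAction Lag t γ }

/-- The discrete action `𝓛_{τ,m}(x,y) = τ(L(x,(y−x)/τ) + F(x,m))`. -/
def discAction {d : ℕ} (L : Torus d → Rd d → ℝ) (F : Torus d → PT d → ℝ)
    (τ : ℝ) (m : PT d) (x y : Rd d) : ℝ :=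
  τ * (L (projT x) (τ⁻¹ • (y - x)) + F (projT x) m)

/-- `τ`-holonomic probability measures on `𝕋^d × ℝ^d`. -/
def Holonomic {d : ℕ} (τ : ℝ) (μ : ProbabilityMeasure (Torus d × Rd d)) : Prop :=
  ∀ φ : Torus d → ℝ, Continuous φ →
    intPM μ (fun p => φ (p.1 + projT (τ • p.2))) = intPM μ (fun p => φ p.1)

/-- `L̄(τ,m)`: infimum of `∫ L_m dμ` over `τ`-holonomic measures. -/
def LbarV {d : ℕ} (L : Torus d → Rd d → ℝ) (F : Torus d → PT d → ℝ) (τ : ℝ) (m : PT d) : ℝ :=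
  sInf { r : ℝ | ∃ μ : ProbabilityMeasure (Torus d × Rd d), Holonomic τ μ ∧
    r = intPM μ (fun p => LmT L F m p.1 p.2) }

/-- Minimizing `τ`-holonomic measure for `L_m`. -/
def MinHolonomic {d : ℕ} (L : Torus d → Rd d → ℝ) (F : Torus d → PT d → ℝ)
    (τ : ℝ) (m : PT d) (μ : ProbabilityMeasure (Torus d × Rd d)) : Prop :=
  Holonomic τ μ ∧ intPM μ (fun p => LmT L F m p.1 p.2) = LbarV L F τ m

/-- Support of a measure. -/
def msupport {X : Type*} [TopologicalSpace X] [MeasurableSpace X] (μ : Measure X) : Set X :=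
  { x | ∀ U : Set X, IsOpen U → x ∈ U → 0 < μ U }

/-- The pushforward `π♯μ` of a measure on `𝕋^d × ℝ^d` under the canonical projection. -/
def pushFst {d : ℕ} (μ : ProbabilityMeasure (Torus d × Rd d)) : Measure (Torus d) :=
  (μ : Measure (Torus d × Rd d)).map Prod.fst

/-- Closed probability measures on `𝕋^d × ℝ^d`. -/
def IsClosedMeasure {d : ℕ} (μ : ProbabilityMeasure (Torus d × Rd d)) : Prop :=
  Integrable (fun p : Torus d × Rd d => ‖p.2‖) (μ : Measure (Torus d × Rd d)) ∧
  ∀ φ : Rd d → ℝ, ContDiff ℝ 1 φ → ZPer φ →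
    intPM μ (fun p => fderiv ℝ φ (liftT p.1) p.2) = 0

/-- The Mañé critical value `c(m) = −inf{∫ L_m dμ : μ closed}`. -/
def maneC {d : ℕ} (L : Torus d → Rd d → ℝ) (F : Torus d → PT d → ℝ) (m : PT d) : ℝ :=
  - sInf { r : ℝ | ∃ μ : ProbabilityMeasure (Torus d × Rd d), IsClosedMeasure μ ∧
      r = intPM μ (fun p => LmT L F m p.1 p.2) }

/-- The Hamiltonian `H(x,p) = sup_v (⟨p,v⟩ − L(x,v))`. -/
def Ham {d : ℕ} (L : Torus d → Rd d → ℝ) (x : Torus d) (p : Rd d) : ℝ :=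
  sSup { r : ℝ | ∃ v : Rd d, r = inner ℝ p v - L x v }

/-- `∂H/∂p(x,p)`, as the gradient of `H(x,·)`. -/
def HamP {d : ℕ} (L : Torus d → Rd d → ℝ) (x : Torus d) (p : Rd d) : Rd d :=
  gradient (fun q => Ham L x q) p

/-- Viscosity solution of `H(x,Du) = G(x)` for a `ℤ^d`-periodic continuous `u`. -/
def IsViscositySol {d : ℕ} (L : Torus d → Rd d → ℝ) (G : Torus d → ℝ) (u : Rd d → ℝ) : Prop :=
  (∀ φ : Rd d → ℝ, ContDiff ℝ 1 φ → ∀ x₀ : Rd d,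
      IsLocalMax (fun x => u x - φ x) x₀ →
      Ham L (projT x₀) (gradient φ x₀) ≤ G (projT x₀)) ∧
  (∀ ψ : Rd d → ℝ, ContDiff ℝ 1 ψ → ∀ y₀ : Rd d,
      IsLocalMin (fun x => u x - ψ x) y₀ →
      G (projT y₀) ≤ Ham L (projT y₀) (gradient ψ y₀))

-- ====================== auxiliary lemmas ======================

lemma aux_fderiv_shift {E F' : Type*} [NormedAddCommGroup E] [NormedSpace ℝ E]
    [NormedAddCommGroup F'] [NormedSpace ℝ F'] {f : E → F'} {c : E}
    (hper : ∀ x, f (x + c) = f x) (x : E) : fderiv ℝ f (x + c) = fderiv ℝ f x := by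
  have hfun : (fun y => f (y + c)) = f := funext hper
  by_cases hd : DifferentiableAt ℝ f (x + c)
  · have hT : HasFDerivAt (fun y : E => y + c) (ContinuousLinearMap.id ℝ E) x :=
      (hasFDerivAt_id x).add_const c
    have h2 := hd.hasFDerivAt.comp x hT
    rw [ContinuousLinearMap.comp_id] at h2
    have h3 : HasFDerivAt (fun y => f (y + c)) (fderiv ℝ f (x + c)) x := h2
    rw [hfun] at h3
    exact h3.fderiv.symm
  · have hd2 : ¬ DifferentiableAt ℝ f x := by
      intro h
      apply hd
      have h' : DifferentiableAt ℝ f ((x + c) + -c) := by rwa [add_neg_cancel_right]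
      have h4 : DifferentiableAt ℝ (fun y => f (y + -c)) (x + c) := by
        have := h'.comp (x + c) ((differentiableAt_id).add_const (-c))
        exact this
      have h5 : (fun y => f (y + -c)) = f := by
        funext y
        have := hper (y + -c)
        rw [neg_add_cancel_right] at this
        exact this.symm
      rwa [h5] at h4
    rw [fderiv_zero_of_not_differentiableAt hd, fderiv_zero_of_not_differentiableAt hd2]

lemma aux_coe_int_addCircle (k : ℤ) : ((k : ℝ) : AddCircle (1:ℝ)) = 0 := by
  have hmem : ((k : ℝ)) ∈ AddSubgroup.zmultiples (1:ℝ) := ⟨k, by simp⟩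
  exact (QuotientAddGroup.eq_zero_iff _).mpr hmem

lemma aux_projT_add_int {d : ℕ} (z : Rd d) (k : Fin d → ℤ) :
    projT (z + toRd fun i => (k i : ℝ)) = projT z := by
  funext i
  show ((z i + (k i : ℝ) : ℝ) : AddCircle (1:ℝ)) = (z i : AddCircle (1:ℝ))
  have : ((z i + (k i : ℝ) : ℝ) : AddCircle (1:ℝ))
      = (z i : AddCircle (1:ℝ)) + ((k i : ℝ) : AddCircle (1:ℝ)) := rfl
  rw [this, aux_coe_int_addCircle, add_zero]

lemma aux_exists_int_rep {d : ℕ} (z : Rd d) :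
    ∃ (w : Rd d) (k : Fin d → ℤ), z = w + (toRd fun i => (k i : ℝ)) ∧ ‖w‖ ≤ Real.sqrt d := by
  refine ⟨z - (toRd fun i => ((⌊z i⌋ : ℝ))), fun i => ⌊z i⌋, by abel, ?_⟩
  have hcoord : ∀ i, (z - (toRd fun i => ((⌊z i⌋ : ℝ)))) i = z i - (⌊z i⌋ : ℝ) := fun i => rfl
  rw [EuclideanSpace.norm_eq]
  have hsum : (∑ i, ‖(z - (toRd fun i => ((⌊z i⌋ : ℝ)))) i‖ ^ 2) ≤ (d : ℝ) := by
    have hbound : ∀ i ∈ Finset.univ, ‖(z - (toRd fun i => ((⌊z i⌋ : ℝ)))) i‖ ^ 2 ≤ 1 := by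
      intro i _
      rw [hcoord i]
      have h1 : 0 ≤ z i - (⌊z i⌋ : ℝ) := sub_nonneg.mpr (Int.floor_le _)
      have h2 : z i - (⌊z i⌋ : ℝ) ≤ 1 := by
        have := Int.lt_floor_add_one (z i); linarith
      rw [Real.norm_eq_abs, abs_of_nonneg h1]
      nlinarith
    calc (∑ i, ‖(z - (toRd fun i => ((⌊z i⌋ : ℝ)))) i‖ ^ 2)
        ≤ Finset.univ.card • (1:ℝ) := Finset.sum_le_card_nsmul _ _ _ hbound
      _ = (d : ℝ) := by simp
  calc Real.sqrt (∑ i, ‖(z - (toRd fun i => ((⌊z i⌋ : ℝ)))) i‖ ^ 2)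
      ≤ Real.sqrt d := Real.sqrt_le_sqrt hsum

lemma aux_support_plane {d : ℕ} {h : Rd d → ℝ} (hh : ContDiff ℝ 2 h)
    (hpos : ∀ v w : Rd d, 0 ≤ iteratedFDeriv ℝ 2 h v ![w, w]) (v₀ u : Rd d) :
    h v₀ + fderiv ℝ h v₀ (u - v₀) ≤ h u := by
  set w := u - v₀ with hw
  set c : ℝ → Rd d := fun t => v₀ + t • w with hc
  have hcd : ∀ t : ℝ, HasDerivAt c w t := by
    intro t
    have h1 : HasDerivAt (fun t : ℝ => t • w) ((1:ℝ) • w) t := (hasDerivAt_id t).smul_const w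
    rw [one_smul] at h1
    exact h1.const_add v₀
  have hφ : ∀ t : ℝ, HasDerivAt (fun t => h (c t)) (fderiv ℝ h (c t) w) t := fun t =>
    ((hh.differentiable (by norm_num) (c t)).hasFDerivAt).comp_hasDerivAt t (hcd t)
  set ψ : ℝ → ℝ := fun t => fderiv ℝ h (c t) w with hψ
  have hD1 : ContDiff ℝ 1 (fderiv ℝ h) := hh.fderiv_right (by norm_num)
  have hψd : ∀ t : ℝ, HasDerivAt ψ ((fderiv ℝ (fderiv ℝ h) (c t) w) w) t := by
    intro t
    have h1 : HasDerivAt (fun t => fderiv ℝ h (c t)) (fderiv ℝ (fderiv ℝ h) (c t) w) t :=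
      ((hD1.differentiable (by norm_num) (c t)).hasFDerivAt).comp_hasDerivAt t (hcd t)
    exact ((ContinuousLinearMap.apply ℝ ℝ w).hasFDerivAt).comp_hasDerivAt t h1
  have hψm : Monotone ψ := by
    apply monotone_of_deriv_nonneg (fun t => (hψd t).differentiableAt)
    intro t
    rw [(hψd t).deriv]
    have hp := hpos (c t) w
    rw [iteratedFDeriv_two_apply] at hp
    simpa using hp
  obtain ⟨ξ, hξ, hslope⟩ := exists_hasDerivAt_eq_slope (fun t => h (c t)) ψ one_pos
    (fun t _ => (hφ t).continuousAt.continuousWithinAt) (fun t _ => hφ t)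
  have hc0 : c 0 = v₀ := by simp [hc]
  have hc1 : c 1 = u := by simp [hc, hw]
  have hξval : ψ ξ = h u - h v₀ := by
    rw [hslope]
    simp [hc0, hc1]
  have h10 : ψ 0 ≤ ψ ξ := hψm hξ.1.le
  have h3 : ψ 0 ≤ h u - h v₀ := hξval ▸ h10
  have h4 : ψ 0 = fderiv ℝ h v₀ w := by simp [hψ, hc0]
  rw [h4] at h3
  linarith

open Metric

lemma aux_curve {d : ℕ} {γ : ℝ → Rd d} {τ : ℝ} (hτ : 0 < τ)
    (hγ : PiecewiseC1On γ τ) :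
    (∀ G : Rd d × Rd d → ℝ, Continuous G →
        IntegrableOn (fun t => G (γ t, deriv γ t)) (Icc 0 τ)) ∧
    IntegrableOn (deriv γ) (Icc 0 τ) ∧
    (∫ t in Icc (0:ℝ) τ, deriv γ t) = γ τ - γ 0 ∧
    (∀ u ∈ Icc (0:ℝ) τ, ‖γ u - γ 0‖ ≤ ∫ t in Icc (0:ℝ) τ, ‖deriv γ t‖) := by
  classical
  obtain ⟨hcont, n, s, hsm, hs0, hsl, hpc⟩ := hγ
  have hne : ∀ i : Fin n, s i.castSucc < s i.succ := fun i => hsm (show i.castSucc < i.succ from Fin.castSucc_lt_succ)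
  have hslb : ∀ j, 0 ≤ s j := fun j => by rw [← hs0]; exact hsm.monotone (Fin.zero_le j)
  have hsub : ∀ j, s j ≤ τ := fun j => by rw [← hsl]; exact hsm.monotone (Fin.le_last j)
  -- derivative exists on open pieces
  have hder : ∀ i : Fin n, ∀ t ∈ Ioo (s i.castSucc) (s i.succ), HasDerivAt γ (deriv γ t) t := by
    intro i t ht
    have hmem : Icc (s i.castSucc) (s i.succ) ∈ nhds t := Icc_mem_nhds ht.1 ht.2
    have hdw : DifferentiableWithinAt ℝ γ (Icc (s i.castSucc) (s i.succ)) t :=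
      ((hpc i).differentiableOn (by norm_num)) t (Ioo_subset_Icc_self ht)
    exact (hdw.differentiableAt hmem).hasDerivAt
  -- bound on derivative on open pieces
  have hBi : ∀ i : Fin n, ∃ B, ∀ t ∈ Ioo (s i.castSucc) (s i.succ), ‖deriv γ t‖ ≤ B := by
    intro i
    have hU : UniqueDiffOn ℝ (Icc (s i.castSucc) (s i.succ)) := uniqueDiffOn_Icc (hne i)
    have hcd : ContinuousOn (derivWithin γ (Icc (s i.castSucc) (s i.succ)))
        (Icc (s i.castSucc) (s i.succ)) := (hpc i).continuousOn_derivWithin hU le_rfl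
    obtain ⟨B, hB⟩ := (isCompact_Icc).exists_bound_of_continuousOn hcd
    refine ⟨B, fun t ht => ?_⟩
    have hmem : Icc (s i.castSucc) (s i.succ) ∈ nhds t := Icc_mem_nhds ht.1 ht.2
    have := hB t (Ioo_subset_Icc_self ht)
    rwa [derivWithin_of_mem_nhds hmem] at this
  choose B hB using hBi
  set Bm : ℝ := ∑ i : Fin n, |B i| with hBm
  have hBm0 : 0 ≤ Bm := Finset.sum_nonneg (fun i _ => abs_nonneg _)
  have hBmax : ∀ i : Fin n, ∀ t ∈ Ioo (s i.castSucc) (s i.succ), ‖deriv γ t‖ ≤ Bm := by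
    intro i t ht
    refine (hB i t ht).trans ((le_abs_self _).trans ?_)
    exact Finset.single_le_sum (f := fun j => |B j|) (fun j _ => abs_nonneg _) (Finset.mem_univ i)
  -- a.e. membership in union of open pieces
  set U : Set ℝ := ⋃ i : Fin n, Ioo (s i.castSucc) (s i.succ) with hU
  have hUopen : IsOpen U := isOpen_iUnion (fun i => isOpen_Ioo)
  have hcover : Icc (0:ℝ) τ \ U ⊆ range s := by
    rintro t ⟨htI, htU⟩
    by_contra hr
    apply htU
    have h0t : s 0 < t := lt_of_le_of_ne (by rw [hs0]; exact htI.1) (fun h => hr ⟨0, h⟩)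
    have htl : t < s (Fin.last n) := lt_of_le_of_ne (by rw [hsl]; exact htI.2)
      (fun h => hr ⟨Fin.last n, h.symm⟩)
    set T := Finset.univ.filter (fun j : Fin (n+1) => s j < t) with hT
    have hTne : T.Nonempty := ⟨0, by simp [hT, h0t]⟩
    set j := T.max' hTne with hj
    have hjt : s j < t := by
      have := T.max'_mem hTne
      simpa [hT] using this
    have hjlast : j ≠ Fin.last n := by
      intro h
      rw [h] at hjt
      exact absurd hjt (not_lt.mpr htl.le)
    refine mem_iUnion.mpr ⟨j.castPred hjlast, ?_, ?_⟩
    · rw [Fin.castSucc_castPred]; exact hjt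
    · by_contra hle
      push_neg at hle
      have hlt : s (j.castPred hjlast).succ < t :=
        lt_of_le_of_ne hle (fun h => hr ⟨_, h⟩)
      have hmem : (j.castPred hjlast).succ ∈ T := by simp [hT, hlt]
      have hle2 := T.le_max' _ hmem
      have h2 : j < (j.castPred hjlast).succ := by
        conv_lhs => rw [← Fin.castSucc_castPred j hjlast]
        exact Fin.castSucc_lt_succ
      exact absurd hle2 (not_le.mpr h2)
  have haeU : ∀ᵐ t ∂(volume.restrict (Icc (0:ℝ) τ)), t ∈ U := by
    rw [MeasureTheory.ae_iff]
    rw [Measure.restrict_apply' measurableSet_Icc]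
    refine measure_mono_null (fun t ht => ?_) ((finite_range s).measure_zero _)
    exact hcover ⟨ht.2, ht.1⟩
  have haeB : ∀ᵐ t ∂(volume.restrict (Icc (0:ℝ) τ)), ‖deriv γ t‖ ≤ Bm := by
    refine haeU.mono (fun t ht => ?_)
    obtain ⟨i, hi⟩ := mem_iUnion.mp ht
    exact hBmax i t hi
  -- measurability
  have hγm : AEMeasurable γ (volume.restrict (Icc (0:ℝ) τ)) :=
    hcont.aemeasurable measurableSet_Icc
  have hdm : AEMeasurable (deriv γ) (volume.restrict (Icc (0:ℝ) τ)) :=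
    (measurable_deriv γ).aemeasurable
  have hfin : volume (Icc (0:ℝ) τ) < ⊤ := measure_Icc_lt_top
  -- integrability of compositions
  have hGint : ∀ G : Rd d × Rd d → ℝ, Continuous G →
      IntegrableOn (fun t => G (γ t, deriv γ t)) (Icc 0 τ) := by
    intro G hG
    have hKγ : IsCompact (γ '' Icc (0:ℝ) τ) := (isCompact_Icc).image_of_continuousOn hcont
    have hKc : IsCompact ((γ '' Icc (0:ℝ) τ) ×ˢ closedBall (0 : Rd d) Bm) :=
      hKγ.prod (isCompact_closedBall _ _)
    obtain ⟨CG, hCG⟩ := hKc.exists_bound_of_continuousOn hG.continuousOn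
    have hmeas : AEStronglyMeasurable (fun t => G (γ t, deriv γ t))
        (volume.restrict (Icc (0:ℝ) τ)) :=
      (hG.measurable.comp_aemeasurable (hγm.prodMk hdm)).aestronglyMeasurable
    refine Integrable.mono' (g := fun _ => CG)
      (integrableOn_const (C := CG) hfin.ne) hmeas ?_
    refine (haeB.and (ae_restrict_mem measurableSet_Icc)).mono (fun t ht => ?_)
    exact hCG _ ⟨mem_image_of_mem γ ht.2, mem_closedBall_zero_iff.mpr ht.1⟩
  have hDint : IntegrableOn (deriv γ) (Icc 0 τ) := by
    refine Integrable.mono' (g := fun _ => Bm)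
      (integrableOn_const (C := Bm) hfin.ne) hdm.aestronglyMeasurable haeB
  -- FTC on subintervals of pieces
  have hII : ∀ a b : ℝ, 0 ≤ a → a ≤ b → b ≤ τ → IntervalIntegrable (deriv γ) volume a b :=
    fun a b h1 h2 h3 => (intervalIntegrable_iff_integrableOn_Icc_of_le h2).mpr
      (hDint.mono_set (Icc_subset_Icc h1 h3))
  have hftc : ∀ (i : Fin n) (a b : ℝ), s i.castSucc ≤ a → a ≤ b → b ≤ s i.succ →
      (∫ t in a..b, deriv γ t) = γ b - γ a := by
    intro i a b ha hab hb
    refine intervalIntegral.integral_eq_sub_of_hasDeriv_right_of_le hab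
      ((hpc i).continuousOn.mono (Icc_subset_Icc ha hb)) ?_ ?_
    · intro t ht
      exact (hder i t ⟨lt_of_le_of_lt ha ht.1, lt_of_lt_of_le ht.2 hb⟩).hasDerivWithinAt
    · exact hII a b (le_trans (hslb _) ha) hab (le_trans hb (hsub _))
  have hsum : ∀ j : Fin (n+1), (∫ t in (0:ℝ)..(s j), deriv γ t) = γ (s j) - γ 0 := by
    intro j
    induction j using Fin.induction with
    | zero => rw [hs0]; simp
    | succ i ih =>
      have h1 := intervalIntegral.integral_add_adjacent_intervals
        (hII 0 (s i.castSucc) le_rfl (hslb _) (hsub _))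
        (hII (s i.castSucc) (s i.succ) (hslb _) (hne i).le (hsub _))
      rw [hftc i (s i.castSucc) (s i.succ) le_rfl (hne i).le le_rfl, ih] at h1
      rw [← h1]; abel
  -- locate an arbitrary point in a piece
  have hn0 : n ≠ 0 := by
    rintro rfl
    have : s (Fin.last 0) = s 0 := rfl
    rw [hsl, hs0] at this
    exact absurd this hτ.ne'
  have hloc : ∀ u ∈ Icc (0:ℝ) τ, ∃ i : Fin n, s i.castSucc ≤ u ∧ u ≤ s i.succ := by
    intro u hu
    set T := Finset.univ.filter (fun j : Fin (n+1) => s j ≤ u) with hT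
    have hTne : T.Nonempty := ⟨0, by simp [hT, hs0, hu.1]⟩
    set j := T.max' hTne with hj
    have hju : s j ≤ u := by
      have := T.max'_mem hTne
      simpa [hT] using this
    by_cases hjl : j = Fin.last n
    · have hl0 : Fin.last n ≠ 0 := by
        intro h
        apply hn0
        have := congrArg Fin.val h
        simpa using this
      refine ⟨(Fin.last n).pred hl0, ?_, ?_⟩
      · refine le_trans (hsm.monotone (Fin.le_last _)) ?_
        rw [← hjl]; exact hju
      · rw [Fin.succ_pred, hsl]; exact hu.2
    · refine ⟨j.castPred hjl, ?_, ?_⟩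
      · rw [Fin.castSucc_castPred]; exact hju
      · by_contra hle
        push_neg at hle
        have hmem : (j.castPred hjl).succ ∈ T := by simp [hT]; exact hle.le
        have hle2 := T.le_max' _ hmem
        have h2 : j < (j.castPred hjl).succ := by
          conv_lhs => rw [← Fin.castSucc_castPred j hjl]
          exact Fin.castSucc_lt_succ
        exact absurd hle2 (not_le.mpr h2)
  have hftc0 : ∀ u ∈ Icc (0:ℝ) τ, (∫ t in (0:ℝ)..u, deriv γ t) = γ u - γ 0 := by
    intro u hu
    obtain ⟨i, h1, h2⟩ := hloc u hu
    have ha := hsum i.castSucc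
    have hb := hftc i (s i.castSucc) u le_rfl h1 h2
    have hadd := intervalIntegral.integral_add_adjacent_intervals
      (hII 0 (s i.castSucc) le_rfl (hslb _) (hsub _))
      (hII (s i.castSucc) u (hslb _) h1 hu.2)
    rw [ha, hb] at hadd
    rw [← hadd]; abel
  refine ⟨hGint, hDint, ?_, ?_⟩
  · have := hftc0 τ ⟨hτ.le, le_rfl⟩
    rw [intervalIntegral.integral_of_le hτ.le] at this
    rw [MeasureTheory.integral_Icc_eq_integral_Ioc]
    exact this
  · intro u hu
    have h := hftc0 u hu
    have hNint : IntegrableOn (fun t => ‖deriv γ t‖) (Icc 0 τ) :=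
      hGint (fun q => ‖q.2‖) (continuous_snd.norm)
    calc ‖γ u - γ 0‖ = ‖∫ t in (0:ℝ)..u, deriv γ t‖ := by rw [h]
      _ ≤ ∫ t in (0:ℝ)..u, ‖deriv γ t‖ := intervalIntegral.norm_integral_le_integral_norm hu.1
      _ = ∫ t in Ioc (0:ℝ) u, ‖deriv γ t‖ := intervalIntegral.integral_of_le hu.1
      _ ≤ ∫ t in Icc (0:ℝ) τ, ‖deriv γ t‖ := by
          refine setIntegral_mono_set hNint (ae_of_all _ (fun t => norm_nonneg _)) ?_
          exact HasSubset.Subset.eventuallyLE (fun t ht => ⟨ht.1.le, le_trans ht.2 hu.2⟩)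

set_option maxHeartbeats 2000000 in
/-- `|h_τ^m(x,y) − 𝓛_{τ,m}(x,y)| ≤ τ² C̃(D)`. -/
theorem stmt1
    {d : ℕ} (hd : 1 ≤ d)
    (L : Torus d → Rd d → ℝ) (hLC2 : TonelliC2 L) (hL1 : TonelliL1 L) (hL2 : TonelliL2 L)
    (F : Torus d → PT d → ℝ) (Finf : ℝ) (hF1 : CouplingF1 F Finf) :
    ∀ D : ℝ, 0 < D → ∃ C : ℝ, 0 < C ∧
      ∀ τ : ℝ, τ ∈ Ioc (0:ℝ) 1 → ∀ (m : PT d) (x y : Rd d), ‖x - y‖ ≤ τ * D →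
        |minAction (LmR L F m) τ x y - discAction L F τ m x y| ≤ τ ^ 2 * C := by
  intro D hD
  classical
  set g : Rd d × Rd d → ℝ := fun q => L (projT q.1) q.2 with hgdef
  have hg : ContDiff ℝ 2 g := hLC2
  obtain ⟨hFinf, hF⟩ := hF1
  obtain ⟨C₁, hC₁⟩ := hL2 1 one_pos
  -- compact set and constants
  have hKc : IsCompact ((closedBall (0 : Rd d) (Real.sqrt d)) ×ˢ (closedBall (0 : Rd d) D)) :=
    (isCompact_closedBall _ _).prod (isCompact_closedBall _ _)
  obtain ⟨A₀, hA₀⟩ := hKc.exists_bound_of_continuousOn hg.continuous.continuousOn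
  obtain ⟨M₁, hM₁K⟩ := hKc.exists_bound_of_continuousOn
    ((hg.continuous_fderiv (by norm_num))).continuousOn
  have hg1 : ContDiff ℝ 1 (fderiv ℝ g) := hg.fderiv_right (by norm_num)
  obtain ⟨M₂, hM₂K⟩ := hKc.exists_bound_of_continuousOn
    ((hg1.continuous_fderiv (by norm_num))).continuousOn
  have h0K : ((0, 0) : Rd d × Rd d) ∈
      (closedBall (0 : Rd d) (Real.sqrt d)) ×ˢ (closedBall (0 : Rd d) D) :=
    ⟨mem_closedBall_self (Real.sqrt_nonneg _), mem_closedBall_self hD.le⟩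
  have hM₁0 : 0 ≤ M₁ := le_trans (norm_nonneg _) (hM₁K _ h0K)
  have hM₂0 : 0 ≤ M₂ := le_trans (norm_nonneg _) (hM₂K _ h0K)
  -- periodicity
  have hgper : ∀ (q : Rd d × Rd d) (k : Fin d → ℤ),
      g (q + ((toRd fun i => (k i : ℝ)), 0)) = g q := by
    intro q k
    show L (projT (q.1 + toRd fun i => (k i : ℝ))) (q.2 + 0) = L (projT q.1) q.2
    rw [add_zero, aux_projT_add_int]
  have hGper : ∀ (q : Rd d × Rd d) (k : Fin d → ℤ),
      fderiv ℝ g (q + ((toRd fun i => (k i : ℝ)), 0)) = fderiv ℝ g q :=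
    fun q k => aux_fderiv_shift (fun q' => hgper q' k) q
  have hG2per : ∀ (q : Rd d × Rd d) (k : Fin d → ℤ),
      fderiv ℝ (fderiv ℝ g) (q + ((toRd fun i => (k i : ℝ)), 0)) = fderiv ℝ (fderiv ℝ g) q :=
    fun q k => aux_fderiv_shift (fun q' => hGper q' k) q
  have hred : ∀ z v : Rd d, ‖v‖ ≤ D →
      ∃ q ∈ (closedBall (0 : Rd d) (Real.sqrt d)) ×ˢ (closedBall (0 : Rd d) D),
        g (z, v) = g q ∧ fderiv ℝ g (z, v) = fderiv ℝ g q ∧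
        fderiv ℝ (fderiv ℝ g) (z, v) = fderiv ℝ (fderiv ℝ g) q := by
    intro z v hv
    obtain ⟨w, k, hzw, hwn⟩ := aux_exists_int_rep z
    have hq : (z, v) = ((w, v) : Rd d × Rd d) + ((toRd fun i => (k i : ℝ)), 0) := by
      rw [Prod.mk_add_mk, add_zero, ← hzw]
    exact ⟨(w, v), ⟨mem_closedBall_zero_iff.mpr hwn, mem_closedBall_zero_iff.mpr hv⟩,
      by rw [hq, hgper], by rw [hq, hGper], by rw [hq, hG2per]⟩
  have hgb : ∀ z v : Rd d, ‖v‖ ≤ D → |g (z, v)| ≤ A₀ := by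
    intro z v hv
    obtain ⟨q, hqK, h1, -, -⟩ := hred z v hv
    rw [h1, ← Real.norm_eq_abs]
    exact hA₀ q hqK
  have hM₁b : ∀ z v : Rd d, ‖v‖ ≤ D → ‖fderiv ℝ g (z, v)‖ ≤ M₁ := by
    intro z v hv
    obtain ⟨q, hqK, -, h2, -⟩ := hred z v hv
    rw [h2]; exact hM₁K q hqK
  have hM₂b : ∀ z v : Rd d, ‖v‖ ≤ D → ‖fderiv ℝ (fderiv ℝ g) (z, v)‖ ≤ M₂ := by
    intro z v hv
    obtain ⟨q, hqK, -, -, h3⟩ := hred z v hv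
    rw [h3]; exact hM₂K q hqK
  have hinl : ‖ContinuousLinearMap.inl ℝ (Rd d) (Rd d)‖ ≤ 1 := by
    refine ContinuousLinearMap.opNorm_le_bound _ zero_le_one (fun u => ?_)
    rw [one_mul]
    show ‖((u, 0) : Rd d × Rd d)‖ ≤ ‖u‖
    rw [Prod.norm_def]
    simp
  -- x-Lipschitz bounds
  have hgdiffat : ∀ (w v : Rd d), HasFDerivAt (fun z => g (z, v))
      ((fderiv ℝ g (w, v)).comp (ContinuousLinearMap.inl ℝ (Rd d) (Rd d))) w := fun w v =>
    by have := ((hg.differentiable two_ne_zero (w, v)).hasFDerivAt).comp w (hasFDerivAt_prodMk_left (𝕜 := ℝ) w v); exact this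
  have hgLip : ∀ v : Rd d, ‖v‖ ≤ D → ∀ z z' : Rd d, |g (z', v) - g (z, v)| ≤ M₁ * ‖z' - z‖ := by
    intro v hv z z'
    have hmain := Convex.norm_image_sub_le_of_norm_fderiv_le (f := fun z => g (z, v))
      (fun w _ => (hgdiffat w v).differentiableAt) (C := M₁) (fun w _ => ?_)
      convex_univ (mem_univ z) (mem_univ z')
    · simpa [Real.norm_eq_abs] using hmain
    · rw [(hgdiffat w v).fderiv]
      calc ‖(fderiv ℝ g (w, v)).comp (ContinuousLinearMap.inl ℝ (Rd d) (Rd d))‖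
          ≤ ‖fderiv ℝ g (w, v)‖ * ‖ContinuousLinearMap.inl ℝ (Rd d) (Rd d)‖ :=
            ContinuousLinearMap.opNorm_comp_le _ _
        _ ≤ M₁ * 1 := mul_le_mul (hM₁b w v hv) hinl (norm_nonneg _) hM₁0
        _ = M₁ := mul_one _
  have hGdiffat : ∀ (w v : Rd d), HasFDerivAt (fun z => fderiv ℝ g (z, v))
      ((fderiv ℝ (fderiv ℝ g) (w, v)).comp (ContinuousLinearMap.inl ℝ (Rd d) (Rd d))) w :=
    fun w v =>
    ((hg1.differentiable one_ne_zero (w, v)).hasFDerivAt).comp w (hasFDerivAt_prodMk_left (𝕜 := ℝ) w v)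
  have hGLip : ∀ v : Rd d, ‖v‖ ≤ D → ∀ z z' : Rd d,
      ‖fderiv ℝ g (z', v) - fderiv ℝ g (z, v)‖ ≤ M₂ * ‖z' - z‖ := by
    intro v hv z z'
    refine Convex.norm_image_sub_le_of_norm_fderiv_le (f := fun z => fderiv ℝ g (z, v))
      (fun w _ => (hGdiffat w v).differentiableAt) (C := M₂) (fun w _ => ?_)
      convex_univ (mem_univ z) (mem_univ z')
    rw [(hGdiffat w v).fderiv]
    calc ‖(fderiv ℝ (fderiv ℝ g) (w, v)).comp (ContinuousLinearMap.inl ℝ (Rd d) (Rd d))‖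
        ≤ ‖fderiv ℝ (fderiv ℝ g) (w, v)‖ * ‖ContinuousLinearMap.inl ℝ (Rd d) (Rd d)‖ :=
          ContinuousLinearMap.opNorm_comp_le _ _
      _ ≤ M₂ * 1 := mul_le_mul (hM₂b w v hv) hinl (norm_nonneg _) hM₂0
      _ = M₂ := mul_one _
  -- constants
  set R : ℝ := |A₀| + |C₁| + 2 * Finf + 1 with hR
  have hR1 : 1 ≤ R := by
    have h1 := abs_nonneg A₀; have h2 := abs_nonneg C₁; rw [hR]; linarith
  have hR0 : 0 ≤ R := le_trans zero_le_one hR1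
  set CU : ℝ := (M₁ + Finf) * D with hCU
  set CL : ℝ := (M₁ + Finf + M₂ * D) * R + M₂ * R ^ 2 with hCL
  have hCU0 : 0 ≤ CU := mul_nonneg (by linarith) hD.le
  have hCL0 : 0 ≤ CL := by
    have h1 : 0 ≤ (M₁ + Finf + M₂ * D) * R := mul_nonneg (by nlinarith) hR0
    have h2 : 0 ≤ M₂ * R ^ 2 := mul_nonneg hM₂0 (sq_nonneg _)
    rw [hCL]; linarith
  refine ⟨CL + CU + 1, by linarith, ?_⟩
  intro τ hτIoc m x y hxy
  obtain ⟨hτ0, hτ1⟩ := hτIoc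
  set vb : Rd d := τ⁻¹ • (y - x) with hv
  have hyx' : ‖y - x‖ ≤ τ * D := by rw [norm_sub_rev]; exact hxy
  have hvD : ‖vb‖ ≤ D := by
    rw [hv, norm_smul, norm_inv, Real.norm_eq_abs, abs_of_pos hτ0]
    calc τ⁻¹ * ‖y - x‖ ≤ τ⁻¹ * (τ * D) :=
          mul_le_mul_of_nonneg_left hyx' (inv_nonneg.mpr hτ0.le)
      _ = D := by field_simp
  have hyx : τ • vb = y - x := by rw [hv]; exact smul_inv_smul₀ hτ0.ne' (y - x)
  have hdisc : discAction L F τ m x y = τ * (g (x, vb) + F (projT x) m) := rfl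
  -- coupling facts for this m
  have hFC : Continuous (fun z : Rd d => F (projT z) m) := (hF m).1.continuous
  have hfbd : ∀ z : Torus d, |F z m| ≤ Finf := (hF m).2.1
  have hfLip : ∀ z z' : Rd d, |F (projT z') m - F (projT z) m| ≤ Finf * ‖z' - z‖ := by
    intro z z'
    have hmain := Convex.norm_image_sub_le_of_norm_fderiv_le (f := fun x' : Rd d => F (projT x') m)
      (fun w _ => ((hF m).1.differentiable (by norm_num)).differentiableAt)
      (fun w _ => (hF m).2.2 w) convex_univ (mem_univ z) (mem_univ z')
    simpa [Real.norm_eq_abs] using hmain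
  -- supporting hyperplane
  have hsupp : ∀ z u : Rd d,
      g (z, vb) + (fderiv ℝ g (z, vb)) (0, u - vb) ≤ g (z, u) := by
    intro z u
    have hpart : ContDiff ℝ 2 (fun v => g (z, v)) := hg.comp (contDiff_const.prodMk contDiff_id)
    have hpos : ∀ v w : Rd d, 0 ≤ iteratedFDeriv ℝ 2 (fun v => g (z, v)) v ![w, w] := by
      intro v w
      by_cases hw : w = 0
      · subst hw
        have h0 : iteratedFDeriv ℝ 2 (fun v => g (z, v)) v ![0, 0] = 0 :=
          (iteratedFDeriv ℝ 2 (fun v => g (z, v)) v).map_coord_zero 0 (by simp)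
        rw [h0]
      · exact (hL1 (projT z) v w hw).le
    have hfd2 : fderiv ℝ (fun v => g (z, v)) vb =
        (fderiv ℝ g (z, vb)).comp (ContinuousLinearMap.inr ℝ (Rd d) (Rd d)) :=
      (((hg.differentiable two_ne_zero (z, vb)).hasFDerivAt).comp vb
        (hasFDerivAt_prodMk_right (𝕜 := ℝ) z vb)).fderiv
    have hmain := aux_support_plane hpart hpos vb u
    rw [hfd2] at hmain
    simpa using hmain
  -- straight-line curve
  set γ₀ : ℝ → Rd d := fun t => x + t • vb with hγ₀def
  have hγ₀cont : Continuous γ₀ := continuous_const.add (continuous_id.smul continuous_const)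
  have hd₀ : ∀ t, deriv γ₀ t = vb := by
    intro t
    have h1 : HasDerivAt (fun t : ℝ => t • vb) ((1 : ℝ) • vb) t := (hasDerivAt_id t).smul_const vb
    rw [one_smul] at h1
    exact (h1.const_add x).deriv
  have hγ₀p : PiecewiseC1On γ₀ τ := by
    refine ⟨hγ₀cont.continuousOn, 1, ![0, τ], ?_, rfl, rfl, ?_⟩
    · rw [Fin.strictMono_iff_lt_succ]
      intro i
      have h0 : i = 0 := Subsingleton.elim i 0
      subst h0
      show (![(0:ℝ), τ]) 0 < (![(0:ℝ), τ]) 1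
      simpa using hτ0
    · intro i
      exact (contDiff_const.add (contDiff_id.smul contDiff_const)).contDiffOn
  have hγ₀0 : γ₀ 0 = x := by
    show x + (0 : ℝ) • vb = x
    rw [zero_smul, add_zero]
  have hγ₀τ : γ₀ τ = y := by
    show x + τ • vb = y
    rw [hyx]; abel
  have hvol : volume.real (Icc (0:ℝ) τ) = τ := by
    rw [measureReal_def, Real.volume_Icc, sub_zero, ENNReal.toReal_ofReal hτ0.le]
  -- upper bound via the straight line
  have hact₀ : curveAction (LmR L F m) τ γ₀ ≤ τ * (g (x, vb) + F (projT x) m) + τ ^ 2 * CU := by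
    have h1 : curveAction (LmR L F m) τ γ₀
        = ∫ t in Icc (0:ℝ) τ, (g (γ₀ t, vb) + F (projT (γ₀ t)) m) := by
      show (∫ t in Icc (0:ℝ) τ, LmR L F m (γ₀ t) (deriv γ₀ t)) = _
      have hfun : (fun t => LmR L F m (γ₀ t) (deriv γ₀ t))
          = fun t => g (γ₀ t, vb) + F (projT (γ₀ t)) m := by
        funext t
        rw [hd₀ t]
        rfl
      rw [hfun]
    rw [h1]
    have h2 : ∀ t ∈ Icc (0:ℝ) τ, g (γ₀ t, vb) + F (projT (γ₀ t)) m
        ≤ (g (x, vb) + F (projT x) m) + (M₁ + Finf) * (τ * D) := by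
      intro t ht
      have hnorm : ‖γ₀ t - x‖ ≤ τ * D := by
        show ‖(x + t • vb) - x‖ ≤ τ * D
        rw [add_sub_cancel_left, norm_smul, Real.norm_eq_abs, abs_of_nonneg ht.1]
        exact mul_le_mul ht.2 hvD (norm_nonneg _) hτ0.le
      have hga := abs_le.mp (hgLip vb hvD x (γ₀ t))
      have hfa := abs_le.mp (hfLip x (γ₀ t))
      have e1 : M₁ * ‖γ₀ t - x‖ ≤ M₁ * (τ * D) := mul_le_mul_of_nonneg_left hnorm hM₁0
      have e2 : Finf * ‖γ₀ t - x‖ ≤ Finf * (τ * D) := mul_le_mul_of_nonneg_left hnorm hFinf.le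
      nlinarith [hga.2, hfa.2]
    have h3 : IntegrableOn (fun t => g (γ₀ t, vb) + F (projT (γ₀ t)) m) (Icc (0:ℝ) τ) := by
      apply ContinuousOn.integrableOn_compact isCompact_Icc
      exact ((hg.continuous.comp (hγ₀cont.prodMk continuous_const)).add
        (hFC.comp hγ₀cont)).continuousOn
    calc (∫ t in Icc (0:ℝ) τ, (g (γ₀ t, vb) + F (projT (γ₀ t)) m))
        ≤ ∫ _t in Icc (0:ℝ) τ, ((g (x, vb) + F (projT x) m) + (M₁ + Finf) * (τ * D)) :=
          setIntegral_mono_on h3 ((integrableOn_const measure_Icc_lt_top.ne))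
            measurableSet_Icc h2
      _ = τ * ((g (x, vb) + F (projT x) m) + (M₁ + Finf) * (τ * D)) := by
          rw [setIntegral_const, hvol, smul_eq_mul]
      _ = τ * (g (x, vb) + F (projT x) m) + τ ^ 2 * CU := by rw [hCU]; ring
  -- the action set
  set S : Set ℝ := {a : ℝ | ∃ γ : ℝ → Rd d, PiecewiseC1On γ τ ∧ γ 0 = x ∧ γ τ = y ∧
      a = curveAction (LmR L F m) τ γ} with hS
  have hSne : S.Nonempty := ⟨curveAction (LmR L F m) τ γ₀, γ₀, hγ₀p, hγ₀0, hγ₀τ, rfl⟩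
  have hlb : ∀ a ∈ S, (C₁ - Finf) * τ ≤ a := by
    rintro a ⟨γ, hγp, hγ0, hγτ, rfl⟩
    obtain ⟨hGint, -, -, -⟩ := aux_curve hτ0 hγp
    have hint : IntegrableOn (fun t => LmR L F m (γ t) (deriv γ t)) (Icc (0:ℝ) τ) :=
      hGint (fun q => g q + F (projT q.1) m) (hg.continuous.add (hFC.comp continuous_fst))
    have h2 : ∀ t ∈ Icc (0:ℝ) τ, (C₁ - Finf) ≤ LmR L F m (γ t) (deriv γ t) := by
      intro t ht
      have h3 := hC₁ (projT (γ t)) (deriv γ t)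
      have h4 := (abs_le.mp (hfbd (projT (γ t)))).1
      show C₁ - Finf ≤ L (projT (γ t)) (deriv γ t) + F (projT (γ t)) m
      have h5 : 0 ≤ ‖deriv γ t‖ := norm_nonneg _
      nlinarith
    calc (C₁ - Finf) * τ = ∫ _t in Icc (0:ℝ) τ, (C₁ - Finf) := by
          rw [setIntegral_const, hvol, smul_eq_mul, mul_comm]
      _ ≤ ∫ t in Icc (0:ℝ) τ, LmR L F m (γ t) (deriv γ t) :=
          setIntegral_mono_on ((integrableOn_const measure_Icc_lt_top.ne))
            hint measurableSet_Icc h2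
      _ = curveAction (LmR L F m) τ γ := rfl
  have hSbdd : BddBelow S := ⟨(C₁ - Finf) * τ, fun a ha => hlb a ha⟩
  have hmin : minAction (LmR L F m) τ x y = sInf S := rfl
  -- upper bound
  have hub : minAction (LmR L F m) τ x y ≤ discAction L F τ m x y + τ ^ 2 * CU := by
    rw [hmin, hdisc]
    exact le_trans (csInf_le hSbdd ⟨γ₀, hγ₀p, hγ₀0, hγ₀τ, rfl⟩) hact₀
  -- lower bound
  have hlow : discAction L F τ m x y - τ ^ 2 * CL ≤ minAction (LmR L F m) τ x y := by
    rw [hmin, hdisc]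
    refine le_csInf hSne ?_
    rintro a ⟨γ, hγp, hγ0, hγτ, rfl⟩
    by_cases hcase : τ * (g (x, vb) + F (projT x) m) ≤ curveAction (LmR L F m) τ γ
    · have h0 : 0 ≤ τ ^ 2 * CL := mul_nonneg (sq_nonneg τ) hCL0
      linarith
    push_neg at hcase
    obtain ⟨hGint, hDint, hFTC, hlen⟩ := aux_curve hτ0 hγp
    set ℓ : ℝ := ∫ t in Icc (0:ℝ) τ, ‖deriv γ t‖ with hℓ
    have hℓ0 : 0 ≤ ℓ := setIntegral_nonneg measurableSet_Icc (fun _ _ => norm_nonneg _)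
    have hNint : IntegrableOn (fun t => ‖deriv γ t‖) (Icc (0:ℝ) τ) :=
      hGint (fun q => ‖q.2‖) continuous_snd.norm
    have hLagint : IntegrableOn (fun t => LmR L F m (γ t) (deriv γ t)) (Icc (0:ℝ) τ) :=
      hGint (fun q => g q + F (projT q.1) m) (hg.continuous.add (hFC.comp continuous_fst))
    have hconst : ∀ c : ℝ, IntegrableOn (fun _ : ℝ => c) (Icc (0:ℝ) τ) :=
      fun c => (integrableOn_const measure_Icc_lt_top.ne)
    -- step 1: length bound
    have hstep1 : ℓ + (C₁ - Finf) * τ ≤ curveAction (LmR L F m) τ γ := by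
      have h2 : ∀ t ∈ Icc (0:ℝ) τ,
          ‖deriv γ t‖ + (C₁ - Finf) ≤ LmR L F m (γ t) (deriv γ t) := by
        intro t ht
        have h3 := hC₁ (projT (γ t)) (deriv γ t)
        have h4 := (abs_le.mp (hfbd (projT (γ t)))).1
        show ‖deriv γ t‖ + (C₁ - Finf) ≤ L (projT (γ t)) (deriv γ t) + F (projT (γ t)) m
        linarith
      have h5 : IntegrableOn (fun t => ‖deriv γ t‖ + (C₁ - Finf)) (Icc (0:ℝ) τ) :=
        hNint.add (hconst _)
      have h6 := setIntegral_mono_on h5 hLagint measurableSet_Icc h2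
      rw [MeasureTheory.integral_add hNint (hconst _), setIntegral_const, hvol,
        smul_eq_mul] at h6
      calc ℓ + (C₁ - Finf) * τ = ℓ + τ * (C₁ - Finf) := by ring
        _ ≤ _ := h6
    have hgxb : g (x, vb) ≤ |A₀| := (le_abs_self _).trans ((hgb x vb hvD).trans (le_abs_self A₀))
    have hfxb : F (projT x) m ≤ Finf := (abs_le.mp (hfbd (projT x))).2
    have hℓR : ℓ ≤ τ * R := by
      have h7 : curveAction (LmR L F m) τ γ ≤ τ * (|A₀| + Finf) := by
        refine hcase.le.trans ?_
        have h7a : g (x, vb) + F (projT x) m ≤ |A₀| + Finf := by linarith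
        exact mul_le_mul_of_nonneg_left h7a hτ0.le
      have h8 : ℓ ≤ τ * (|A₀| + Finf) - (C₁ - Finf) * τ := by linarith
      have h9 : τ * (|A₀| + Finf) - (C₁ - Finf) * τ ≤ τ * R := by
        rw [hR]
        have h10 := neg_abs_le C₁
        nlinarith
      linarith
    set p : Rd d →L[ℝ] ℝ :=
      (fderiv ℝ g (x, vb)).comp (ContinuousLinearMap.inr ℝ (Rd d) (Rd d)) with hp
    -- pointwise estimate
    have hpw : ∀ t ∈ Icc (0:ℝ) τ,
        (g (x, vb) + F (projT x) m) + p (deriv γ t - vb)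
          - ((M₁ + Finf + M₂ * D) * (τ * R) + (M₂ * (τ * R)) * ‖deriv γ t‖)
          ≤ LmR L F m (γ t) (deriv γ t) := by
      intro t ht
      have hzx : ‖γ t - x‖ ≤ τ * R := by
        rw [← hγ0]
        exact le_trans (hlen t ht) hℓR
      have h1 := hsupp (γ t) (deriv γ t)
      have h2a := abs_le.mp (hgLip vb hvD x (γ t))
      have h2b : M₁ * ‖γ t - x‖ ≤ M₁ * (τ * R) := mul_le_mul_of_nonneg_left hzx hM₁0
      have h2 : g (x, vb) - M₁ * (τ * R) ≤ g (γ t, vb) := by linarith [h2a.1]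
      have h3a : ‖fderiv ℝ g (γ t, vb) - fderiv ℝ g (x, vb)‖ ≤ M₂ * (τ * R) :=
        le_trans (hGLip vb hvD x (γ t)) (mul_le_mul_of_nonneg_left hzx hM₂0)
      have h3b : ‖deriv γ t - vb‖ ≤ ‖deriv γ t‖ + D :=
        le_trans (norm_sub_le _ _) (by linarith [hvD])
      have h3c : |(fderiv ℝ g (γ t, vb)) (0, deriv γ t - vb)
          - (fderiv ℝ g (x, vb)) (0, deriv γ t - vb)|
          ≤ (M₂ * (τ * R)) * (‖deriv γ t‖ + D) := by
        have e1 : (fderiv ℝ g (γ t, vb)) (0, deriv γ t - vb)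
            - (fderiv ℝ g (x, vb)) (0, deriv γ t - vb)
            = (fderiv ℝ g (γ t, vb) - fderiv ℝ g (x, vb)) ((0 : Rd d), deriv γ t - vb) := by
          rw [ContinuousLinearMap.sub_apply]
        rw [e1, ← Real.norm_eq_abs]
        calc ‖(fderiv ℝ g (γ t, vb) - fderiv ℝ g (x, vb)) ((0 : Rd d), deriv γ t - vb)‖
            ≤ ‖fderiv ℝ g (γ t, vb) - fderiv ℝ g (x, vb)‖ * ‖((0 : Rd d), deriv γ t - vb)‖ :=
              ContinuousLinearMap.le_opNorm _ _
          _ ≤ (M₂ * (τ * R)) * (‖deriv γ t‖ + D) := by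
              have e2 : ‖(((0 : Rd d), deriv γ t - vb) : Rd d × Rd d)‖ = ‖deriv γ t - vb‖ := by
                rw [Prod.norm_def]; simp
              rw [e2]
              exact mul_le_mul h3a h3b (norm_nonneg _)
                (mul_nonneg hM₂0 (mul_nonneg hτ0.le hR0))
      have h4a := abs_le.mp (hfLip x (γ t))
      have h4b : Finf * ‖γ t - x‖ ≤ Finf * (τ * R) := mul_le_mul_of_nonneg_left hzx hFinf.le
      have h4 : F (projT x) m - Finf * (τ * R) ≤ F (projT (γ t)) m := by linarith [h4a.1]
      have h3 : (fderiv ℝ g (x, vb)) (0, deriv γ t - vb)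
          - (M₂ * (τ * R)) * (‖deriv γ t‖ + D)
          ≤ (fderiv ℝ g (γ t, vb)) (0, deriv γ t - vb) := by
        have h3d := (abs_le.mp h3c).1; linarith
      have hcomp : p (deriv γ t - vb) = (fderiv ℝ g (x, vb)) (0, deriv γ t - vb) := rfl
      show _ ≤ L (projT (γ t)) (deriv γ t) + F (projT (γ t)) m
      have hgval : L (projT (γ t)) (deriv γ t) = g (γ t, deriv γ t) := rfl
      rw [hcomp, hgval]
      nlinarith [h1, h2, h3, h4]
    -- integrate the pointwise estimate
    have hconstV : IntegrableOn (fun _ : ℝ => vb) (Icc (0:ℝ) τ) :=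
      (integrableOn_const measure_Icc_lt_top.ne)
    have hIsub : IntegrableOn (fun t => deriv γ t - vb) (Icc (0:ℝ) τ) :=
      hDint.sub hconstV
    have hIp : IntegrableOn (fun t => p (deriv γ t - vb)) (Icc (0:ℝ) τ) :=
      ContinuousLinearMap.integrable_comp p hIsub
    have hIpc : IntegrableOn
        (fun t => (g (x, vb) + F (projT x) m) + p (deriv γ t - vb)) (Icc (0:ℝ) τ) :=
      (hconst _).add hIp
    have hIneg : IntegrableOn
        (fun t => (M₁ + Finf + M₂ * D) * (τ * R) + (M₂ * (τ * R)) * ‖deriv γ t‖)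
        (Icc (0:ℝ) τ) := (hconst _).add (hNint.const_mul _)
    have hImono : (∫ t in Icc (0:ℝ) τ, ((g (x, vb) + F (projT x) m) + p (deriv γ t - vb)
        - ((M₁ + Finf + M₂ * D) * (τ * R) + (M₂ * (τ * R)) * ‖deriv γ t‖)))
        ≤ curveAction (LmR L F m) τ γ :=
      setIntegral_mono_on (hIpc.sub hIneg) hLagint measurableSet_Icc
        (fun t ht => hpw t ht)
    have hsplit : (∫ t in Icc (0:ℝ) τ, ((g (x, vb) + F (projT x) m) + p (deriv γ t - vb)
        - ((M₁ + Finf + M₂ * D) * (τ * R) + (M₂ * (τ * R)) * ‖deriv γ t‖)))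
        = (τ * (g (x, vb) + F (projT x) m) + p ((y - x) - τ • vb))
          - (τ * ((M₁ + Finf + M₂ * D) * (τ * R)) + (M₂ * (τ * R)) * ℓ) := by
      rw [MeasureTheory.integral_sub hIpc hIneg]
      congr 1
      · rw [MeasureTheory.integral_add (hconst _) hIp]
        congr 1
        · rw [setIntegral_const, hvol, smul_eq_mul]
        · rw [ContinuousLinearMap.integral_comp_comm p hIsub]
          congr 1
          rw [MeasureTheory.integral_sub hDint hconstV, setIntegral_const, hvol,
            hFTC, hγ0, hγτ]
      · rw [MeasureTheory.integral_add (hconst _) (hNint.const_mul _)]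
        congr 1
        · rw [setIntegral_const, hvol, smul_eq_mul]
        · rw [MeasureTheory.integral_const_mul]
    have hpzero : p ((y - x) - τ • vb) = 0 := by rw [hyx, sub_self, map_zero]
    have h8 : (M₂ * (τ * R)) * ℓ ≤ (M₂ * (τ * R)) * (τ * R) :=
      mul_le_mul_of_nonneg_left hℓR (mul_nonneg hM₂0 (mul_nonneg hτ0.le hR0))
    rw [hsplit, hpzero] at hImono
    rw [hCL]
    nlinarith [hImono, h8]
  -- conclusion
  rw [abs_le]
  constructor
  · have h1 : τ ^ 2 * CL ≤ τ ^ 2 * (CL + CU + 1) :=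
      mul_le_mul_of_nonneg_left (by linarith) (sq_nonneg τ)
    linarith
  · have h2 : τ ^ 2 * CU ≤ τ ^ 2 * (CL + CU + 1) :=
      mul_le_mul_of_nonneg_left (by linarith) (sq_nonneg τ)
    linarith
end
end

section
/- For each constant κ>0 there exist constants D_κ, C_κ > 0 such that for every ℤ^d-periodic Lipschitz function φ:ℝ^d→ℝ with Lipschitz constant at most κ, every τ ∈ (0,1], every m ∈ P(𝕋^d), and both choices A^m_τ = 𝓛_{τ,m} and A^m_τ = h_τ^m: (i) for every y ∈ ℝ^d, every x attaining the infimum inf_{x∈ℝ^d}(φ(x) + A^m_τ(x,y)) satisfies |y−x| ≤ τ D_κ; (ii) sup_{y∈ℝ^d} |inf_{x∈ℝ^d}(φ(x) + A^m_τ(x,y)) − φ(y)| ≤ τ C_κ. -/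
open MeasureTheory Set Filter

noncomputable section

section AuxStmt6

variable {d : ℕ}

lemma projT_liftT (z : Torus d) : projT (liftT z) = z := by
  funext i
  exact (AddCircle.equivIco 1 0).symm_apply_apply (z i)

lemma norm_liftT_le (hd : 1 ≤ d) (z : Torus d) : ‖liftT z‖ ≤ (d : ℝ) := by
  have h1 : ‖liftT z‖ ≤ Real.sqrt d := by
    rw [EuclideanSpace.norm_eq]
    apply Real.sqrt_le_sqrt
    calc ∑ i, ‖liftT z i‖ ^ 2 ≤ ∑ _i : Fin d, (1:ℝ) := by
          apply Finset.sum_le_sum; intro i _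
          have h := (AddCircle.equivIco 1 0 (z i)).2
          have hb : ‖liftT z i‖ ≤ 1 := by
            show ‖((AddCircle.equivIco 1 0 (z i)) : ℝ)‖ ≤ 1
            rw [Real.norm_eq_abs, abs_le]
            constructor <;> [linarith [h.1]; linarith [h.2]]
          nlinarith [norm_nonneg (liftT z i)]
      _ = (d : ℝ) := by simp
  have h2 : Real.sqrt d ≤ d := by
    nlinarith [Real.sq_sqrt (show (0:ℝ) ≤ d by positivity), Real.sqrt_nonneg (d:ℝ),
      (show (1:ℝ) ≤ d by exact_mod_cast hd)]
  linarith

lemma exists_L0_bound (hd : 1 ≤ d) {L : Torus d → Rd d → ℝ} (hLC2 : TonelliC2 L) :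
    ∃ ℓ0 : ℝ, ∀ x : Torus d, L x 0 ≤ ℓ0 := by
  have hg : Continuous (fun x : Rd d => L (projT x) 0) :=
    hLC2.continuous.comp (continuous_id.prodMk continuous_const)
  obtain ⟨x₀, _hx₀, hmax⟩ := (isCompact_closedBall (0:Rd d) d).exists_isMaxOn
    ⟨0, Metric.mem_closedBall_self (by positivity)⟩ hg.continuousOn
  refine ⟨L (projT x₀) 0, fun x => ?_⟩
  have hmem : liftT x ∈ Metric.closedBall (0:Rd d) d := by
    rw [Metric.mem_closedBall, dist_zero_right]; exact norm_liftT_le hd x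
  have h3 : L (projT (liftT x)) 0 ≤ L (projT x₀) 0 := hmax hmem
  rwa [projT_liftT] at h3

lemma piece_bound {γ : ℝ → Rd d} {p q : ℝ}
    (h : ContDiffOn ℝ 1 γ (Icc p q)) (hpq : p < q) :
    ∃ M : ℝ, 0 ≤ M ∧ ∀ t ∈ Ioo p q, HasDerivAt γ (deriv γ t) t ∧ ‖deriv γ t‖ ≤ M := by
  have hu : UniqueDiffOn ℝ (Icc p q) := uniqueDiffOn_Icc hpq
  have hdw : ContinuousOn (derivWithin γ (Icc p q)) (Icc p q) :=
    h.continuousOn_derivWithin hu le_rfl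
  obtain ⟨M, hM⟩ := isCompact_Icc.exists_bound_of_continuousOn hdw
  refine ⟨max M 0, le_max_right _ _, fun t ht => ?_⟩
  have hmem : Icc p q ∈ nhds t := Icc_mem_nhds ht.1 ht.2
  have hdiff : DifferentiableAt ℝ γ t :=
    ((h.differentiableOn one_ne_zero) t (Ioo_subset_Icc_self ht)).differentiableAt hmem
  refine ⟨hdiff.hasDerivAt, ?_⟩
  have heq : derivWithin γ (Icc p q) t = deriv γ t := derivWithin_of_mem_nhds hmem
  calc ‖deriv γ t‖ = ‖derivWithin γ (Icc p q) t‖ := by rw [heq]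
    _ ≤ M := hM t (Ioo_subset_Icc_self ht)
    _ ≤ max M 0 := le_max_left _ _

lemma curve_action_lower {Lag : Rd d → Rd d → ℝ}
    (hLag : Continuous fun q : Rd d × Rd d => Lag q.1 q.2)
    {K c : ℝ} (hK : 0 ≤ K) (hlow : ∀ x v, K * ‖v‖ + c ≤ Lag x v)
    {τ : ℝ} (hτ : 0 < τ) {γ : ℝ → Rd d} (hγ : PiecewiseC1On γ τ) :
    K * ‖γ τ - γ 0‖ + τ * c ≤ curveAction Lag τ γ := by
  obtain ⟨hcont, n, s, hsm, hs0, hsl, hps⟩ := hγ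
  set a : ℕ → ℝ := fun k => s ⟨min k n, Nat.lt_succ_of_le (min_le_right _ _)⟩ with ha
  have hax : ∀ (k : ℕ) (hk : k ≤ n), a k = s ⟨k, Nat.lt_succ_of_le hk⟩ := by
    intro k hk
    simp only [ha]
    congr 1
    exact Fin.ext (by simp [Nat.min_eq_left hk])
  have ha0 : a 0 = 0 := by
    rw [hax 0 (Nat.zero_le n)]
    have h0 : (⟨0, Nat.lt_succ_of_le (Nat.zero_le n)⟩ : Fin (n+1)) = 0 := Fin.ext (by simp)
    rw [h0, hs0]
  have han : a n = τ := by
    rw [hax n le_rfl]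
    have hl : (⟨n, Nat.lt_succ_of_le le_rfl⟩ : Fin (n+1)) = Fin.last n := Fin.ext (by simp)
    rw [hl, hsl]
  have hs_range : ∀ j : Fin (n+1), s j ∈ Icc (0:ℝ) τ := fun j =>
    ⟨hs0 ▸ hsm.monotone (Fin.zero_le j), hsl ▸ hsm.monotone (Fin.le_last j)⟩
  have hstep : ∀ k, k < n → a k < a (k+1) ∧ ContDiffOn ℝ 1 γ (Icc (a k) (a (k+1))) := by
    intro k hk
    have h1 := hax k hk.le
    have h2 := hax (k+1) hk
    have e1 : (⟨k, Nat.lt_succ_of_le hk.le⟩ : Fin (n+1)) = (⟨k, hk⟩ : Fin n).castSucc :=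
      Fin.ext (by simp)
    have e2 : (⟨k+1, Nat.lt_succ_of_le hk⟩ : Fin (n+1)) = (⟨k, hk⟩ : Fin n).succ :=
      Fin.ext (by simp)
    constructor
    · rw [h1, h2]
      exact hsm (show (⟨k, _⟩ : Fin (n+1)) < ⟨k+1, _⟩ from by
        simp [Fin.lt_def])
    · rw [h1, h2, e1, e2]
      exact hps ⟨k, hk⟩
  have hpiece : ∀ k, k < n →
      IntervalIntegrable (deriv γ) volume (a k) (a (k+1)) ∧
      IntervalIntegrable (fun t => Lag (γ t) (deriv γ t)) volume (a k) (a (k+1)) ∧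
      ‖γ (a (k+1)) - γ (a k)‖ ≤ ∫ t in a k..a (k+1), ‖deriv γ t‖ := by
    intro k hk
    obtain ⟨hlt, hcd⟩ := hstep k hk
    obtain ⟨M, hM0, hM⟩ := piece_bound hcd hlt
    have hioo : MeasurableSet (Ioo (a k) (a (k+1))) := measurableSet_Ioo
    have hder_meas : AEStronglyMeasurable (deriv γ)
        (volume.restrict (Ioo (a k) (a (k+1)))) :=
      (measurable_deriv γ).aestronglyMeasurable.restrict
    have hIoo : IntegrableOn (deriv γ) (Ioo (a k) (a (k+1))) volume := by
      refine Integrable.mono' (g := fun _ => M)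
        (integrableOn_const measure_Ioo_lt_top.ne) hder_meas ?_
      exact (ae_restrict_iff' hioo).mpr (ae_of_all _ fun t ht => (hM t ht).2)
    have hIi : IntervalIntegrable (deriv γ) volume (a k) (a (k+1)) := by
      rw [intervalIntegrable_iff, uIoc_of_le hlt.le]
      exact hIoo.congr_set_ae Ioo_ae_eq_Ioc.symm
    have hγcont : ContinuousOn γ (Icc (a k) (a (k+1))) := hcd.continuousOn
    have hftc : ∫ t in a k..a (k+1), deriv γ t = γ (a (k+1)) - γ (a k) :=
      intervalIntegral.integral_eq_sub_of_hasDerivAt_of_le hlt.le hγcont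
        (fun t ht => (hM t ht).1) hIi
    refine ⟨hIi, ?_, ?_⟩
    · have hKc : IsCompact ((γ '' Icc (a k) (a (k+1))) ×ˢ Metric.closedBall (0:Rd d) M) :=
        (isCompact_Icc.image_of_continuousOn hγcont).prod (isCompact_closedBall _ _)
      obtain ⟨B, hB⟩ := hKc.exists_bound_of_continuousOn hLag.continuousOn
      have hmeas : AEStronglyMeasurable (fun t => Lag (γ t) (deriv γ t))
          (volume.restrict (Ioo (a k) (a (k+1)))) := by
        have h1 : AEMeasurable γ (volume.restrict (Ioo (a k) (a (k+1)))) :=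
          (hγcont.mono Ioo_subset_Icc_self).aemeasurable hioo
        have h2 : AEMeasurable (fun t => (γ t, deriv γ t))
            (volume.restrict (Ioo (a k) (a (k+1)))) :=
          h1.prodMk (measurable_deriv γ).aemeasurable
        exact (hLag.measurable.comp_aemeasurable h2).aestronglyMeasurable
      have hIoo2 : IntegrableOn (fun t => Lag (γ t) (deriv γ t))
          (Ioo (a k) (a (k+1))) volume := by
        refine Integrable.mono' (g := fun _ => B)
          (integrableOn_const measure_Ioo_lt_top.ne) hmeas ?_
        refine (ae_restrict_iff' hioo).mpr (ae_of_all _ fun t ht => ?_)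
        exact hB (γ t, deriv γ t)
          ⟨mem_image_of_mem γ (Ioo_subset_Icc_self ht), by
            simpa [Metric.mem_closedBall, dist_zero_right] using (hM t ht).2⟩
      rw [intervalIntegrable_iff, uIoc_of_le hlt.le]
      exact hIoo2.congr_set_ae Ioo_ae_eq_Ioc.symm
    · rw [← hftc]
      exact intervalIntegral.norm_integral_le_integral_norm hlt.le
  have hIderiv : ∀ k < n, IntervalIntegrable (fun t => ‖deriv γ t‖) volume (a k) (a (k+1)) :=
    fun k hk => ((hpiece k hk).1).norm
  have hnormInt : IntervalIntegrable (fun t => ‖deriv γ t‖) volume 0 τ := by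
    have := IntervalIntegrable.trans_iterate (a := a) hIderiv
    rwa [ha0, han] at this
  have hLagInt : IntervalIntegrable (fun t => Lag (γ t) (deriv γ t)) volume 0 τ := by
    have := IntervalIntegrable.trans_iterate (a := a) (fun k hk => (hpiece k hk).2.1)
    rwa [ha0, han] at this
  have hsum : ∑ k ∈ Finset.range n, ∫ t in a k..a (k+1), ‖deriv γ t‖
      = ∫ t in (0:ℝ)..τ, ‖deriv γ t‖ := by
    have := intervalIntegral.sum_integral_adjacent_intervals (a := a) hIderiv
    rwa [ha0, han] at this
  have hlen : ‖γ τ - γ 0‖ ≤ ∫ t in (0:ℝ)..τ, ‖deriv γ t‖ := by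
    have htel : ∑ k ∈ Finset.range n, (γ (a (k+1)) - γ (a k)) = γ τ - γ 0 := by
      rw [Finset.sum_range_sub (fun k => γ (a k)) n, ha0, han]
    calc ‖γ τ - γ 0‖ = ‖∑ k ∈ Finset.range n, (γ (a (k+1)) - γ (a k))‖ := by rw [htel]
      _ ≤ ∑ k ∈ Finset.range n, ‖γ (a (k+1)) - γ (a k)‖ := norm_sum_le _ _
      _ ≤ ∑ k ∈ Finset.range n, ∫ t in a k..a (k+1), ‖deriv γ t‖ :=
          Finset.sum_le_sum fun k hk => (hpiece k (Finset.mem_range.mp hk)).2.2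
      _ = _ := hsum
  have hmono : ∫ t in (0:ℝ)..τ, (K * ‖deriv γ t‖ + c)
      ≤ ∫ t in (0:ℝ)..τ, Lag (γ t) (deriv γ t) :=
    intervalIntegral.integral_mono_on hτ.le
      ((hnormInt.const_mul K).add intervalIntegrable_const) hLagInt
      (fun t _ => hlow (γ t) (deriv γ t))
  have heval : ∫ t in (0:ℝ)..τ, (K * ‖deriv γ t‖ + c)
      = K * (∫ t in (0:ℝ)..τ, ‖deriv γ t‖) + τ * c := by
    rw [intervalIntegral.integral_add (hnormInt.const_mul K) intervalIntegrable_const,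
      intervalIntegral.integral_const_mul, intervalIntegral.integral_const]
    simp [smul_eq_mul]
  have hca : curveAction Lag τ γ = ∫ t in (0:ℝ)..τ, Lag (γ t) (deriv γ t) := by
    rw [curveAction, integral_Icc_eq_integral_Ioc, intervalIntegral.integral_of_le hτ.le]
  rw [hca]
  calc K * ‖γ τ - γ 0‖ + τ * c
      ≤ K * (∫ t in (0:ℝ)..τ, ‖deriv γ t‖) + τ * c := by
        have := mul_le_mul_of_nonneg_left hlen hK
        linarith
    _ = ∫ t in (0:ℝ)..τ, (K * ‖deriv γ t‖ + c) := heval.symm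
    _ ≤ _ := hmono

lemma piecewise_of_contDiff {τ : ℝ} (hτ : 0 < τ) {γ : ℝ → Rd d} (h : ContDiff ℝ 1 γ) :
    PiecewiseC1On γ τ := by
  refine ⟨h.continuous.continuousOn, 1, fun i => τ * ((i : Fin 2) : ℕ), ?_, by simp, ?_,
    fun _ => h.contDiffOn⟩
  · intro i j hij
    have hn : ((i : Fin 2) : ℕ) < ((j : Fin 2) : ℕ) := hij
    exact mul_lt_mul_of_pos_left (by exact_mod_cast hn) hτ
  · simp [Fin.last]

lemma curveAction_const (Lag : Rd d → Rd d → ℝ) {τ : ℝ} (hτ : 0 < τ) (y : Rd d) :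
    curveAction Lag τ (fun _ => y) = τ * Lag y 0 := by
  simp only [curveAction, deriv_const']
  rw [setIntegral_const, Real.volume_real_Icc_of_le hτ.le, sub_zero, smul_eq_mul]

lemma minAction_lower {Lag : Rd d → Rd d → ℝ}
    (hLag : Continuous fun q : Rd d × Rd d => Lag q.1 q.2)
    {K c : ℝ} (hK : 0 ≤ K) (hlow : ∀ x v, K * ‖v‖ + c ≤ Lag x v)
    {τ : ℝ} (hτ : 0 < τ) (x y : Rd d) :
    K * ‖y - x‖ + τ * c ≤ minAction Lag τ x y := by
  apply le_csInf
  · refine ⟨curveAction Lag τ (fun t => x + (τ⁻¹ * t) • (y - x)),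
      fun t => x + (τ⁻¹ * t) • (y - x), ?_, by simp, ?_, rfl⟩
    · exact piecewise_of_contDiff hτ
        (contDiff_const.add ((contDiff_const.mul contDiff_id).smul contDiff_const))
    · show x + (τ⁻¹ * τ) • (y - x) = y
      rw [inv_mul_cancel₀ hτ.ne', one_smul, add_sub_cancel]
  · rintro b ⟨γ, hγ, h0, ht, rfl⟩
    have := curve_action_lower hLag hK hlow hτ hγ
    rwa [h0, ht] at this

lemma minAction_le_diag {Lag : Rd d → Rd d → ℝ}
    (hLag : Continuous fun q : Rd d × Rd d => Lag q.1 q.2)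
    {K c : ℝ} (hK : 0 ≤ K) (hlow : ∀ x v, K * ‖v‖ + c ≤ Lag x v)
    {τ : ℝ} (hτ : 0 < τ) (y : Rd d) :
    minAction Lag τ y y ≤ τ * Lag y 0 := by
  apply csInf_le
  · refine ⟨τ * c, ?_⟩
    rintro b ⟨γ, hγ, h0, ht, rfl⟩
    have := curve_action_lower hLag hK hlow hτ hγ
    rw [h0, ht] at this
    simpa using this
  · exact ⟨fun _ => y, piecewise_of_contDiff hτ contDiff_const, rfl, rfl,
      (curveAction_const Lag hτ y).symm⟩

end AuxStmt6

/-- localization of minimizers and one-step estimate for Lipschitz periodic `φ`,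
for both `A = 𝓛_{τ,m}` and `A = h_τ^m`. -/
theorem stmt6
    {d : ℕ} (hd : 1 ≤ d)
    (L : Torus d → Rd d → ℝ) (hLC2 : TonelliC2 L) (hL1 : TonelliL1 L) (hL2 : TonelliL2 L)
    (F : Torus d → PT d → ℝ) (Finf : ℝ) (hF1 : CouplingF1 F Finf) :
    ∀ κ : ℝ, 0 < κ → ∃ Dκ Cκ : ℝ, 0 < Dκ ∧ 0 < Cκ ∧
      ∀ A : ℝ → PT d → Rd d → Rd d → ℝ,
        ((A = fun τ m x y => discAction L F τ m x y) ∨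
         (A = fun τ m x y => minAction (LmR L F m) τ x y)) →
        ∀ φ : Rd d → ℝ, ZPer φ → (∀ x y : Rd d, |φ x - φ y| ≤ κ * ‖x - y‖) →
        ∀ τ : ℝ, τ ∈ Ioc (0:ℝ) 1 → ∀ m : PT d,
          (∀ y x : Rd d,
            φ x + A τ m x y = sInf { r : ℝ | ∃ x' : Rd d, r = φ x' + A τ m x' y } →
            ‖y - x‖ ≤ τ * Dκ) ∧
          (∀ y : Rd d,
            |sInf { r : ℝ | ∃ x : Rd d, r = φ x + A τ m x y } - φ y| ≤ τ * Cκ) := by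
  intro κ hκ
  obtain ⟨hF0, hFm⟩ := hF1
  obtain ⟨C, hC⟩ := hL2 (κ + 1) (by linarith)
  obtain ⟨ℓ0, hℓ0⟩ := exists_L0_bound hd hLC2
  have hc12 : C - Finf ≤ ℓ0 + Finf := by
    have h1 := hC (projT (0 : Rd d)) 0
    have h2 := hℓ0 (projT (0 : Rd d))
    simp only [norm_zero, mul_zero, zero_add] at h1
    linarith
  refine ⟨(ℓ0 + Finf) - (C - Finf) + 1, |C - Finf| + |ℓ0 + Finf| + 1, by linarith,
    by positivity, ?_⟩
  intro A hA φ _hper hlip τ hτm m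
  obtain ⟨hτ, hτ1⟩ := hτm
  have hκ1 : (0:ℝ) ≤ κ + 1 := by linarith
  have hLagLow : ∀ x v : Rd d, (κ + 1) * ‖v‖ + (C - Finf) ≤ LmR L F m x v := by
    intro x v
    have h1 := hC (projT x) v
    have h2 := (abs_le.mp ((hFm m).2.1 (projT x))).1
    simp only [LmR, LmT]
    linarith
  have hLagDiag : ∀ y : Rd d, LmR L F m y 0 ≤ ℓ0 + Finf := by
    intro y
    have h1 := hℓ0 (projT y)
    have h2 := (abs_le.mp ((hFm m).2.1 (projT y))).2
    simp only [LmR, LmT]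
    linarith
  have hLagCont : Continuous fun q : Rd d × Rd d => LmR L F m q.1 q.2 := by
    have h1 : Continuous fun q : Rd d × Rd d => L (projT q.1) q.2 := hLC2.continuous
    have h2 : Continuous fun x : Rd d => F (projT x) m := (hFm m).1.continuous
    exact h1.add (h2.comp continuous_fst)
  have hAlow : ∀ x y : Rd d, (κ + 1) * ‖y - x‖ + τ * (C - Finf) ≤ A τ m x y := by
    rcases hA with rfl | rfl
    · intro x y
      show (κ + 1) * ‖y - x‖ + τ * (C - Finf) ≤ discAction L F τ m x y
      have hnorm : ‖τ⁻¹ • (y - x)‖ = τ⁻¹ * ‖y - x‖ := by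
        rw [norm_smul, Real.norm_eq_abs, abs_of_pos (inv_pos.mpr hτ)]
      have h1 := hC (projT x) (τ⁻¹ • (y - x))
      rw [hnorm] at h1
      have h2 := (abs_le.mp ((hFm m).2.1 (projT x))).1
      rw [discAction]
      calc (κ + 1) * ‖y - x‖ + τ * (C - Finf)
          = τ * ((κ + 1) * (τ⁻¹ * ‖y - x‖) + (C - Finf)) := by
            field_simp
        _ ≤ τ * (L (projT x) (τ⁻¹ • (y - x)) + F (projT x) m) :=
            mul_le_mul_of_nonneg_left (by linarith) hτ.le
    · intro x y
      exact minAction_lower hLagCont hκ1 hLagLow hτ x y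
  have hAdiag : ∀ y : Rd d, A τ m y y ≤ τ * (ℓ0 + Finf) := by
    rcases hA with rfl | rfl
    · intro y
      show discAction L F τ m y y ≤ τ * (ℓ0 + Finf)
      rw [discAction, sub_self, smul_zero]
      exact mul_le_mul_of_nonneg_left (hLagDiag y) hτ.le
    · intro y
      exact le_trans (minAction_le_diag hLagCont hκ1 hLagLow hτ y)
        (mul_le_mul_of_nonneg_left (hLagDiag y) hτ.le)
  have hφlow : ∀ x' y : Rd d, φ y - κ * ‖y - x'‖ ≤ φ x' := by
    intro x' y
    have h := (abs_le.mp (hlip x' y)).1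
    rw [norm_sub_rev x' y] at h
    linarith
  have hbdd : ∀ y : Rd d, ∀ r ∈ { r : ℝ | ∃ x' : Rd d, r = φ x' + A τ m x' y },
      φ y + τ * (C - Finf) ≤ r := by
    rintro y r ⟨x', rfl⟩
    have h1 := hAlow x' y
    have h2 := hφlow x' y
    have h3 : (0:ℝ) ≤ ‖y - x'‖ := norm_nonneg _
    nlinarith
  have hInfLe : ∀ y : Rd d,
      sInf { r : ℝ | ∃ x' : Rd d, r = φ x' + A τ m x' y } ≤ φ y + τ * (ℓ0 + Finf) := by
    intro y
    refine le_trans (csInf_le ⟨φ y + τ * (C - Finf), fun r hr => hbdd y r hr⟩ ⟨y, rfl⟩) ?_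
    linarith [hAdiag y]
  have hLeInf : ∀ y : Rd d,
      φ y + τ * (C - Finf) ≤ sInf { r : ℝ | ∃ x' : Rd d, r = φ x' + A τ m x' y } :=
    fun y => le_csInf ⟨φ y + A τ m y y, y, rfl⟩ (hbdd y)
  constructor
  · intro y x hx
    have h1 : φ x + A τ m x y ≤ φ y + τ * (ℓ0 + Finf) := by
      rw [hx]; exact hInfLe y
    have h2 := hAlow x y
    have h3 := hφlow x y
    have h4 : ‖y - x‖ ≤ τ * ((ℓ0 + Finf) - (C - Finf)) := by nlinarith [norm_nonneg (y - x)]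
    nlinarith
  · intro y
    have h1 := hInfLe y
    have h2 := hLeInf y
    rw [abs_le]
    constructor
    · have : -(τ * (|C - Finf| + |ℓ0 + Finf| + 1)) ≤ τ * (C - Finf) := by
        nlinarith [neg_abs_le (C - Finf), abs_nonneg (ℓ0 + Finf), abs_nonneg (C - Finf)]
      linarith
    · have : τ * (ℓ0 + Finf) ≤ τ * (|C - Finf| + |ℓ0 + Finf| + 1) := by
        nlinarith [le_abs_self (ℓ0 + Finf), abs_nonneg (C - Finf), abs_nonneg (ℓ0 + Finf)]
      linarith
end
end
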